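/- Let π be the letter-flip 0↔1 on binary words of length n composed with rotation by l. If n/gcd(n,l) is odd then no word is fixed by πr^l; if n/gcd(n,l) is even then exactly 2^{gcd(n,l)} words are fixed by πr^l. -/

import Mathlib

open Finset
open Fin.NatCast

theorem flip_rotation_fixed_words_binary (n : ℕ) [NeZero n] (l : Fin n) :
    (Odd (n / Nat.gcd n l.val) →
      Nat.card {w : Fin n → Fin 2 // ∀ i : Fin n, w i = 1 - w (i + l)} = 0) ∧
    (Even (n / Nat.gcd n l.val) →
      Nat.card {w : Fin n → Fin 2 // ∀ i : Fin n, w i = 1 - w (i + l)} =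
        2 ^ Nat.gcd n l.val) := by
  have hn : 0 < n := Nat.pos_of_ne_zero (NeZero.ne n)
  set d := Nat.gcd n l.val with hdef
  set m := n / d with hmdef
  have hd : 0 < d := Nat.gcd_pos_of_pos_left _ hn
  have hdn : d ∣ n := Nat.gcd_dvd_left _ _
  have hdl : d ∣ l.val := Nat.gcd_dvd_right _ _
  have hmd : m * d = n := Nat.div_mul_cancel hdn
  have hdle : d ≤ n := Nat.le_of_dvd hn hdn
  have hm : 0 < m := Nat.div_pos hdle hd
  obtain ⟨c, hc⟩ := hdl
  have hdl : d ∣ l.val := ⟨c, hc⟩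
  have hml : m * l.val = n * c := by rw [hc, ← hmd]; ring
  -- flip facts
  have hflip1 : ∀ x : Fin 2, (1 : Fin 2) - x = x + 1 := by decide
  have hflip2 : ∀ x : Fin 2, x = 1 - (x + 1) := by decide
  -- key iteration lemma
  have key : ∀ (w : Fin n → Fin 2), (∀ i : Fin n, w i = 1 - w (i + l)) →
      ∀ (k : ℕ) (i : Fin n), w ⟨(i.val + k * l.val) % n, Nat.mod_lt _ hn⟩ = w i + (k : Fin 2) := by
    intro w hw k
    induction k with
    | zero =>
      intro i
      simp only [Nat.zero_mul, Nat.add_zero, Nat.cast_zero, add_zero]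
      congr 1
      exact Fin.ext (Nat.mod_eq_of_lt i.isLt)
    | succ k ih =>
      intro i
      have hstep : ∀ j : Fin n, w (j + l) = w j + 1 := by
        intro j
        rw [hw j, hflip1]
        exact (by decide : ∀ x : Fin 2, x = x + 1 + 1) _
      have hj : (⟨(i.val + k * l.val) % n, Nat.mod_lt _ hn⟩ + l : Fin n)
          = ⟨(i.val + (k+1) * l.val) % n, Nat.mod_lt _ hn⟩ := by
        apply Fin.ext
        rw [Fin.val_add]
        simp only []
        rw [Nat.mod_add_mod]
        congr 1
        ring
      have := hstep ⟨(i.val + k * l.val) % n, Nat.mod_lt _ hn⟩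
      rw [hj] at this
      rw [this, ih i]
      push_cast
      rw [add_assoc]
  constructor
  · -- odd case
    intro hodd
    have hE : IsEmpty {w : Fin n → Fin 2 // ∀ i : Fin n, w i = 1 - w (i + l)} := by
      constructor
      rintro ⟨w, hw⟩
      have h0 := key w hw m 0
      have hv : ((0 : Fin n).val + m * l.val) % n = (0 : Fin n).val := by
        rw [hml]
        simp
      have hcast : ((m : Fin 2)) = 1 := by
        apply Fin.ext
        rw [Fin.val_natCast]
        simpa using Nat.odd_iff.mp hodd
      rw [hcast] at h0
      have heq : (⟨((0 : Fin n).val + m * l.val) % n, Nat.mod_lt _ hn⟩ : Fin n) = 0 := Fin.ext hv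
      rw [heq] at h0
      exact (by decide : ∀ x : Fin 2, ¬ (x = x + 1)) _ h0
    haveI := hE
    exact Nat.card_of_isEmpty
  · -- even case
    intro heven
    by_cases hl0 : l.val = 0
    · exfalso
      have hdn' : d = n := by simp [hdef, hl0]
      have hm1 : m = 1 := by rw [hmdef, hdn', Nat.div_self hn]
      rw [hm1] at heven
      exact (Nat.not_even_iff_odd.mpr odd_one) heven
    -- Bezout coefficient
    obtain ⟨b, hb⟩ : ∃ b, l.val * b % n = d := by
      have hlt : Nat.gcd l.val n < n := by
        calc Nat.gcd l.val n ≤ l.val := Nat.le_of_dvd (Nat.pos_of_ne_zero hl0) (Nat.gcd_dvd_left _ _)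
        _ < n := l.isLt
      obtain ⟨b, -, hb⟩ := Nat.exists_mul_mod_eq_gcd hlt
      exact ⟨b, by rw [hb, Nat.gcd_comm]⟩
    have hb' : l.val * b ≡ d [MOD n] := by
      unfold Nat.ModEq
      rw [hb, Nat.mod_eq_of_lt (lt_of_le_of_lt (Nat.le_of_dvd (Nat.pos_of_ne_zero hl0) hdl) l.isLt)]
    set K : Fin n → ℕ := fun i => (i.val / d * b) % m with hK
    have hKlt : ∀ i, K i < m := fun i => Nat.mod_lt _ hm
    have rep : ∀ i : Fin n, (i.val % d + K i * l.val) % n = i.val := by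
      intro i
      have e2 : (i.val / d) * (l.val * b) ≡ (i.val / d) * d [MOD n] := (hb'.mul_left _)
      have e3 : (i.val / d * b) * l.val = K i * l.val + (i.val / d * b / m) * (m * l.val) := by
        conv_lhs => rw [← Nat.div_add_mod (i.val / d * b) m]
        simp only [hK]
        ring
      have e4 : K i * l.val ≡ (i.val / d * b) * l.val [MOD n] := by
        rw [e3, hml]
        unfold Nat.ModEq
        rw [show K i * l.val + i.val / d * b / m * (n * c)
            = K i * l.val + (i.val / d * b / m * c) * n by ring]
        rw [Nat.add_mul_mod_self_right]
      have e5 : i.val % d + K i * l.val ≡ i.val [MOD n] := by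
        calc i.val % d + K i * l.val ≡ i.val % d + (i.val / d * b) * l.val [MOD n] :=
              Nat.ModEq.add_left _ e4
          _ = i.val % d + (i.val / d) * (l.val * b) := by ring
          _ ≡ i.val % d + (i.val / d) * d [MOD n] := Nat.ModEq.add_left _ e2
          _ = i.val := by rw [mul_comm]; exact Nat.mod_add_div i.val d
      calc (i.val % d + K i * l.val) % n = i.val % n := e5
        _ = i.val := Nat.mod_eq_of_lt i.isLt
    have hrsame : ∀ i : Fin n, (i + l).val % d = i.val % d := by
      intro i
      rw [Fin.val_add, Nat.mod_mod_of_dvd _ hdn, hc, mul_comm, Nat.add_mul_mod_self_right]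
    -- parity claim
    obtain ⟨s, hs⟩ := heven
    have kpar : ∀ i : Fin n, K (i + l) % 2 = (K i + 1) % 2 := by
      intro i
      have h1 : (i.val % d + K (i + l) * l.val) % n = (i + l).val := by
        have := rep (i + l); rwa [hrsame i] at this
      have hrep' : i.val % d + K i * l.val ≡ i.val [MOD n] := by
        unfold Nat.ModEq; rw [rep i, Nat.mod_eq_of_lt i.isLt]
      have h2 : (i.val % d + (K i + 1) * l.val) % n = (i + l).val := by
        rw [Fin.val_add, show i.val % d + (K i + 1) * l.val
            = i.val % d + K i * l.val + l.val from by ring]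
        exact hrep'.add_right l.val
      have hmodeq : (i.val % d + K (i + l) * l.val) ≡ (i.val % d + (K i + 1) * l.val) [MOD n] := by
        unfold Nat.ModEq; rw [h1, h2]
      have hz : (n : ℤ) ∣ ((K i : ℤ) + 1 - K (i + l)) * l.val := by
        have h := (Int.natCast_modEq_iff.mpr hmodeq).dvd
        push_cast at h
        convert h using 1
        ring
      have hcZ : (l.val : ℤ) = (d : ℤ) * c := by exact_mod_cast hc
      have hnZ : (n : ℤ) = (m : ℤ) * d := by exact_mod_cast hmd.symm
      have hdvd : (m : ℤ) ∣ ((K i : ℤ) + 1 - K (i + l)) * c := by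
        rcases hz with ⟨t, ht⟩
        refine ⟨t, mul_left_cancel₀ (show (d:ℤ) ≠ 0 by exact_mod_cast hd.ne') ?_⟩
        rw [hcZ, hnZ] at ht
        linear_combination ht
      have hcopN : Nat.Coprime m c := by
        have h := Nat.coprime_div_gcd_div_gcd (m := n) (n := l.val) hd
        rwa [← hdef, ← hmdef, hc, Nat.mul_div_cancel_left c hd] at h
      have hcop : IsCoprime (m : ℤ) (c : ℤ) := by
        rw [Int.isCoprime_iff_gcd_eq_one, Int.gcd_natCast_natCast]
        exact hcopN
      have hzd : (m : ℤ) ∣ ((K i : ℤ) + 1 - K (i + l)) := hcop.dvd_of_dvd_mul_right hdvd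
      rcases hzd with ⟨t, ht⟩
      have b1 : K i < m := hKlt i
      have b2 : K (i + l) < m := hKlt (i + l)
      have ht0 : t = 0 ∨ t = 1 := by
        rcases lt_trichotomy t 0 with h | h | h
        · exfalso
          nlinarith [(by exact_mod_cast hm : (0:ℤ) < m),
            (by exact_mod_cast b2 : (K (i+l) : ℤ) < m),
            (Int.natCast_nonneg (K i)), (Int.natCast_nonneg (K (i+l)))]
        · left; exact h
        · right
          by_contra hne
          have h2t : (2:ℤ) ≤ t := by omega
          nlinarith [(by exact_mod_cast hm : (0:ℤ) < m),
            (by exact_mod_cast b1 : (K i : ℤ) < m),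
            (Int.natCast_nonneg (K (i+l)))]
      rcases ht0 with rfl | rfl
      · simp only [mul_zero] at ht
        omega
      · simp only [mul_one] at ht
        omega
    -- build equivalence
    have e : {w : Fin n → Fin 2 // ∀ i : Fin n, w i = 1 - w (i + l)} ≃ (Fin d → Fin 2) := by
      refine
        { toFun := fun w => fun j => w.val ⟨j.val, lt_of_lt_of_le j.isLt hdle⟩
          invFun := fun v => ⟨fun i => v ⟨i.val % d, Nat.mod_lt _ hd⟩ + ((K i : Fin 2)), ?_⟩
          left_inv := ?_
          right_inv := ?_ }
      · intro i
        have h1 : (K (i + l) : Fin 2) = (K i : Fin 2) + 1 := by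
          apply Fin.ext
          rw [Fin.val_add, Fin.val_natCast, Fin.val_natCast, kpar i]
          simp [Nat.add_mod]
        have h2 : (⟨(i + l).val % d, Nat.mod_lt _ hd⟩ : Fin d) = ⟨i.val % d, Nat.mod_lt _ hd⟩ :=
          Fin.ext (hrsame i)
        simp only [h1, h2]
        rw [← add_assoc]
        exact hflip2 _
      · rintro ⟨w, hw⟩
        apply Subtype.ext
        funext i
        simp only []
        have hk := key w hw (K i) ⟨i.val % d, lt_of_lt_of_le (Nat.mod_lt _ hd) hdle⟩
        have hidx : (⟨((⟨i.val % d, lt_of_lt_of_le (Nat.mod_lt _ hd) hdle⟩ : Fin n).val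
            + K i * l.val) % n, Nat.mod_lt _ hn⟩ : Fin n) = i := Fin.ext (rep i)
        rw [hidx] at hk
        exact hk.symm
      · intro v
        funext j
        simp only []
        have h1 : (⟨(⟨j.val, lt_of_lt_of_le j.isLt hdle⟩ : Fin n).val % d, Nat.mod_lt _ hd⟩ : Fin d)
            = j := Fin.ext (Nat.mod_eq_of_lt j.isLt)
        have h2 : K ⟨j.val, lt_of_lt_of_le j.isLt hdle⟩ = 0 := by
          simp [hK, Nat.div_eq_of_lt j.isLt]
        rw [h1, h2]
        simp
    rw [Nat.card_congr e]
    simp [Nat.card_eq_fintype_card]
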